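/- With the notation below, the Dirichlet solution satisfies u(m) = 0 if and only if E is an eigenvalue of the real symmetric matrix J_m. -/

import Mathlib

open Matrix Finset

/-- Spectrum of a real matrix via eigenvectors. -/
lemma mem_spectrum_iff_exists_eigvec {n : Type*} [Fintype n] [DecidableEq n]
    (M : Matrix n n ℝ) (E : ℝ) :
    E ∈ spectrum ℝ M ↔ ∃ v, v ≠ 0 ∧ M *ᵥ v = E • v := by
  have key : ∀ v : n → ℝ, (algebraMap ℝ (Matrix n n ℝ) E - M) *ᵥ v = E • v - M *ᵥ v := by
    intro v
    rw [Matrix.sub_mulVec]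
    congr 1
    ext i
    simp [Matrix.algebraMap_eq_diagonal, Matrix.mulVec_diagonal]
  rw [spectrum.mem_iff, Matrix.isUnit_iff_isUnit_det, isUnit_iff_ne_zero, not_ne_iff,
    ← Matrix.exists_mulVec_eq_zero_iff]
  constructor
  · rintro ⟨v, hv, h⟩
    rw [key, sub_eq_zero] at h
    exact ⟨v, hv, h.symm⟩
  · rintro ⟨v, hv, h⟩
    exact ⟨v, hv, by rw [key, h, sub_self]⟩

/-- The Dirichlet solution satisfies `u m = 0` if and only if `E` is an eigenvalue
of the `m × m` real symmetric Jacobi matrix `J`. -/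
theorem dirichlet_solution_vanishes_iff_eigenvalue
    (m : ℕ) (hm : 1 ≤ m) (E : ℝ) (a b : ℕ → ℝ)
    (ha : ∀ n, n ≤ m - 1 → 0 < a n)
    (J : Matrix (Fin m) (Fin m) ℝ)
    (hJ : ∀ i j : Fin m, J i j =
      if (i : ℕ) = (j : ℕ) then b i
      else if (i : ℕ) + 1 = (j : ℕ) then a i
      else if (j : ℕ) + 1 = (i : ℕ) then a j
      else 0)
    (u : ℕ → ℝ) (hu0 : u 0 = 1)
    (hurec : ∀ n, n < m → a n * u (n + 1) =
      (E - b n) * u n - (if n = 0 then 0 else a (n - 1) * u (n - 1))) :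
    u m = 0 ↔ E ∈ spectrum ℝ J := by
  have ha' : ∀ n, n < m → 0 < a n := fun n hn => ha n (by omega)
  -- the row computation
  have hrow : ∀ (w : ℕ → ℝ) (i : Fin m), (J *ᵥ fun j : Fin m => w j) i =
      (if (i : ℕ) + 1 < m then a i * w ((i : ℕ) + 1) else 0) + b i * w i +
      (if (i : ℕ) = 0 then 0 else a ((i : ℕ) - 1) * w ((i : ℕ) - 1)) := by
    intro w i
    have : (J *ᵥ fun j : Fin m => w j) i
        = ∑ j : Fin m, ((if (i : ℕ) = (j : ℕ) then b i
            else if (i : ℕ) + 1 = (j : ℕ) then a i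
            else if (j : ℕ) + 1 = (i : ℕ) then a j
            else 0) * w j) := by
      simp only [Matrix.mulVec, dotProduct]
      refine Finset.sum_congr rfl fun j _ => by rw [hJ]
    rw [this]
    have hconv : ∀ j : Fin m, ((if (i : ℕ) = (j : ℕ) then b i
            else if (i : ℕ) + 1 = (j : ℕ) then a i
            else if (j : ℕ) + 1 = (i : ℕ) then a j
            else 0) * w j)
        = (fun k : ℕ => (if k = (i : ℕ) then b i * w k else 0)
            + (if k = (i : ℕ) + 1 then a i * w k else 0)
            + (if (i : ℕ) ≠ 0 ∧ k = (i : ℕ) - 1 then a k * w k else 0)) (j : ℕ) := by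
      intro j
      simp only
      split_ifs <;> first | ring1 | (exfalso; omega)
    rw [Finset.sum_congr rfl fun j _ => hconv j, Fin.sum_univ_eq_sum_range
      (fun k : ℕ => (if k = (i : ℕ) then b i * w k else 0)
            + (if k = (i : ℕ) + 1 then a i * w k else 0)
            + (if (i : ℕ) ≠ 0 ∧ k = (i : ℕ) - 1 then a k * w k else 0)) m]
    rw [Finset.sum_add_distrib, Finset.sum_add_distrib]
    rw [Finset.sum_ite_eq' (Finset.range m) ((i : ℕ)) (fun k => b i * w k)]
    rw [Finset.sum_ite_eq' (Finset.range m) ((i : ℕ) + 1) (fun k => a i * w k)]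
    by_cases hi0 : (i : ℕ) = 0
    · simp only [hi0, ne_eq, not_true_eq_false, false_and, if_false, Finset.sum_const_zero]
      simp only [Finset.mem_range, hi0]
      rw [if_pos (by omega : 0 < m)]
      simp only [if_true]
      ring
    · have : ∀ k ∈ Finset.range m, (if (i : ℕ) ≠ 0 ∧ k = (i : ℕ) - 1 then a k * w k else 0)
          = (if k = (i : ℕ) - 1 then a k * w k else 0) := by
        intro k _
        simp [hi0]
      rw [Finset.sum_congr rfl this,
        Finset.sum_ite_eq' (Finset.range m) ((i : ℕ) - 1) (fun k => a k * w k)]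
      have h1 : (i : ℕ) ∈ Finset.range m := Finset.mem_range.mpr i.isLt
      have h2 : (i : ℕ) - 1 ∈ Finset.range m := Finset.mem_range.mpr (by omega)
      simp only [h1, if_true, h2, Finset.mem_range, hi0, if_false]
      ring
  rw [mem_spectrum_iff_exists_eigvec]
  constructor
  · -- u m = 0 → eigenvector (u 0, ..., u (m-1))
    intro hum
    refine ⟨fun j : Fin m => u j, ?_, ?_⟩
    · intro h
      have := congrFun h ⟨0, by omega⟩
      simp [hu0] at this
    · funext i
      rw [hrow u i]
      have hr := hurec i i.isLt
      have hprev : (if (i : ℕ) = 0 then (0:ℝ) else a ((i : ℕ) - 1) * u ((i : ℕ) - 1))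
          = (if (i : ℕ) = 0 then 0 else a ((i : ℕ) - 1) * u ((i : ℕ) - 1)) := rfl
      have hup : (if (i : ℕ) + 1 < m then a i * u ((i : ℕ) + 1) else 0)
          = a i * u ((i : ℕ) + 1) := by
        by_cases h : (i : ℕ) + 1 < m
        · rw [if_pos h]
        · have : (i : ℕ) + 1 = m := by omega
          rw [if_neg h, this, hum, mul_zero]
      rw [hup, hr]
      simp only [Pi.smul_apply, smul_eq_mul]
      ring
  · -- eigenvector → u m = 0
    rintro ⟨v, hv, hev⟩
    set w : ℕ → ℝ := fun n => if h : n < m then v ⟨n, h⟩ else 0 with hw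
    have hvw : v = fun j : Fin m => w j := by
      funext j
      simp [hw, j.isLt]
    have heq : ∀ i : Fin m,
        (if (i : ℕ) + 1 < m then a i * w ((i : ℕ) + 1) else 0) + b i * w i +
        (if (i : ℕ) = 0 then 0 else a ((i : ℕ) - 1) * w ((i : ℕ) - 1)) = E * w i := by
      intro i
      have := congrFun hev i
      rw [hvw] at this
      rw [← hrow w i, this]
      simp [hvw]
    -- all entries are w 0 * u n
    have hscal : ∀ n, n < m → w n = w 0 * u n := by
      intro n
      induction n using Nat.strong_induction_on with
      | _ n ih =>
        match n with
        | 0 => intro _; simp [hu0]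
        | (k+1) =>
          intro hk1
          have hk : k < m := by omega
          have h1 := heq ⟨k, hk⟩
          simp only [Fin.val_mk] at h1
          rw [if_pos hk1] at h1
          have hak : a k ≠ 0 := ne_of_gt (ha' k hk)
          have hwk : w k = w 0 * u k := ih k (by omega) hk
          have hr := hurec k hk
          by_cases hk0 : k = 0
          · subst hk0
            simp only [if_pos rfl, if_true, zero_add] at h1 hr
            rw [hwk] at h1
            field_simp at h1 hr ⊢
            -- a 0 * w 1 = (E - b 0) * (w 0 * u 0); a 0 * u 1 = (E - b 0) * u 0
            have : a 0 * w 1 = (E - b 0) * (w 0 * u 0) := by linarith [h1]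
            have h2 : a 0 * (w 0 * u 1) = (E - b 0) * (w 0 * u 0) := by
              rw [show a 0 * (w 0 * u 1) = w 0 * (a 0 * u 1) by ring, hr]; ring
            have := this.trans h2.symm
            exact mul_left_cancel₀ hak this
          · rw [if_neg hk0] at h1 hr
            have hwkm : w (k-1) = w 0 * u (k-1) := ih (k-1) (by omega) (by omega)
            rw [hwk, hwkm] at h1
            have : a k * w (k+1) = (E - b k) * (w 0 * u k) - a (k-1) * (w 0 * u (k-1)) := by
              linarith [h1]
            have h2 : a k * (w 0 * u (k+1)) = (E - b k) * (w 0 * u k) - a (k-1) * (w 0 * u (k-1)) := by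
              rw [show a k * (w 0 * u (k+1)) = w 0 * (a k * u (k+1)) by ring, hr]; ring
            exact mul_left_cancel₀ hak (this.trans h2.symm)
    -- w 0 ≠ 0
    have hw0 : w 0 ≠ 0 := by
      intro h0
      apply hv
      rw [hvw]
      funext j
      simp only [Pi.zero_apply]
      rw [hscal j j.isLt, h0, zero_mul]
    -- last row gives u m = 0
    have hlast := heq ⟨m - 1, by omega⟩
    simp only [Fin.val_mk] at hlast
    rw [if_neg (by omega : ¬ (m - 1 + 1 < m))] at hlast
    have hr := hurec (m-1) (by omega)
    have hwm1 : w (m-1) = w 0 * u (m-1) := hscal (m-1) (by omega)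
    have key : w 0 * (a (m-1) * u m) = 0 := by
      by_cases hm1 : m - 1 = 0
      · rw [if_pos hm1] at hlast hr
        rw [hwm1] at hlast
        have : a (m-1) * u ((m-1)+1) = (E - b (m-1)) * u (m-1) := by rw [hr]; ring
        have hm' : (m-1) + 1 = m := by omega
        rw [hm'] at this
        rw [this]
        have : b (m-1) * (w 0 * u (m-1)) = E * (w 0 * u (m-1)) := by
          have := hlast; linarith
        nlinarith [this]
      · rw [if_neg hm1] at hlast hr
        have hwm2 : w (m-1-1) = w 0 * u (m-1-1) := hscal (m-1-1) (by omega)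
        rw [hwm1, hwm2] at hlast
        have hm' : (m-1) + 1 = m := by omega
        rw [hm'] at hr
        calc w 0 * (a (m-1) * u m)
            = w 0 * ((E - b (m-1)) * u (m-1) - a (m-1-1) * u (m-1-1)) := by rw [hr]
          _ = 0 := by linarith [hlast]
    have := mul_eq_zero.mp key
    rcases this with h | h
    · exact absurd h hw0
    · rcases mul_eq_zero.mp h with h' | h'
      · exact absurd h' (ne_of_gt (ha (m-1) le_rfl))
      · exact h'
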